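/- For every k ≥ 0 such that J_k is nonsingular, with J̃_k := J*(J_k⁻¹ − J*⁻¹), Broyden's 'bad' update satisfies τ_{k+1}² ≤ τ_k² − ‖J*(J_k⁻¹ − H_k)y_k‖²/‖y_k‖² + 2(τ_k‖J̃_k‖ + ‖J̃_k‖²). -/

import Mathlib

open Matrix MeasureTheory

noncomputable def specNorm {n : ℕ} (A : Matrix (Fin n) (Fin n) ℝ) : ℝ :=
  ‖Matrix.toEuclideanCLM (𝕜 := ℝ) A‖

noncomputable def frobNorm {n : ℕ} (A : Matrix (Fin n) (Fin n) ℝ) : ℝ :=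
  Real.sqrt (∑ i, ∑ j, (A i j) ^ 2)

noncomputable def vnorm {n : ℕ} (x : Fin n → ℝ) : ℝ :=
  Real.sqrt (∑ i, (x i) ^ 2)

noncomputable def intJac {n : ℕ} (J : (Fin n → ℝ) → Matrix (Fin n) (Fin n) ℝ)
    (x u : Fin n → ℝ) : Matrix (Fin n) (Fin n) ℝ :=
  Matrix.of fun i j => ∫ t in (0:ℝ)..(1:ℝ), J (x + t • u) i j

lemma vnorm_nonneg {n : ℕ} (v : Fin n → ℝ) : 0 ≤ vnorm v := Real.sqrt_nonneg _

lemma frobNorm_nonneg {n : ℕ} (A : Matrix (Fin n) (Fin n) ℝ) : 0 ≤ frobNorm A :=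
  Real.sqrt_nonneg _

lemma specNorm_nonneg {n : ℕ} (A : Matrix (Fin n) (Fin n) ℝ) : 0 ≤ specNorm A :=
  norm_nonneg _

lemma vnorm_sq {n : ℕ} (v : Fin n → ℝ) : vnorm v ^ 2 = ∑ i, v i ^ 2 := by
  rw [vnorm, Real.sq_sqrt]; positivity

lemma frobNorm_sq {n : ℕ} (A : Matrix (Fin n) (Fin n) ℝ) :
    frobNorm A ^ 2 = ∑ i, ∑ j, A i j ^ 2 := by
  rw [frobNorm, Real.sq_sqrt]; positivity

lemma dot_self_eq {n : ℕ} (v : Fin n → ℝ) : v ⬝ᵥ v = vnorm v ^ 2 := by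
  rw [vnorm_sq]; simp [dotProduct, sq]

lemma vnorm_eq {n : ℕ} (v : Fin n → ℝ) : vnorm v = ‖(WithLp.equiv 2 (Fin n → ℝ)).symm v‖ := by
  rw [EuclideanSpace.norm_eq]
  simp [vnorm, Real.norm_eq_abs, sq_abs]

set_option synthInstance.maxHeartbeats 1000000 in
lemma vnorm_mulVec_le_spec {n : ℕ} (A : Matrix (Fin n) (Fin n) ℝ) (y : Fin n → ℝ) :
    vnorm (A *ᵥ y) ≤ specNorm A * vnorm y := by
  have h := (Matrix.toEuclideanCLM (𝕜 := ℝ) A).le_opNorm ((WithLp.equiv 2 (Fin n → ℝ)).symm y)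
  rw [show (Matrix.toEuclideanCLM (𝕜 := ℝ) A) ((WithLp.equiv 2 (Fin n → ℝ)).symm y) = (WithLp.equiv 2 (Fin n → ℝ)).symm (A *ᵥ y) from rfl] at h
  rw [vnorm_eq, vnorm_eq, specNorm]
  simpa [Matrix.toLin'_apply] using h

lemma vnorm_mulVec_le_frob {n : ℕ} (A : Matrix (Fin n) (Fin n) ℝ) (y : Fin n → ℝ) :
    vnorm (A *ᵥ y) ≤ frobNorm A * vnorm y := by
  rw [vnorm, frobNorm, vnorm, ← Real.sqrt_mul (by positivity)]
  apply Real.sqrt_le_sqrt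
  rw [Finset.sum_mul]
  refine Finset.sum_le_sum fun i _ => ?_
  simpa [mulVec, dotProduct] using Finset.sum_mul_sq_le_sq_mul_sq Finset.univ (fun j => A i j) y

lemma abs_dot_le {n : ℕ} (a b : Fin n → ℝ) : |a ⬝ᵥ b| ≤ vnorm a * vnorm b := by
  rw [← Real.sqrt_sq_eq_abs, vnorm, vnorm, ← Real.sqrt_mul (by positivity)]
  exact Real.sqrt_le_sqrt (by simpa [dotProduct] using Finset.sum_mul_sq_le_sq_mul_sq Finset.univ a b)

lemma mul_vecMulVec {n : ℕ} (M : Matrix (Fin n) (Fin n) ℝ) (v w : Fin n → ℝ) :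
    M * vecMulVec v w = vecMulVec (M *ᵥ v) w := by
  ext i j
  simp only [Matrix.mul_apply, vecMulVec_apply, mulVec, dotProduct]
  rw [Finset.sum_mul]
  exact Finset.sum_congr rfl fun l _ => by ring

lemma frob_expand {n : ℕ} (A : Matrix (Fin n) (Fin n) ℝ) (w y : Fin n → ℝ) (c : ℝ) :
    frobNorm (A + c • vecMulVec w y) ^ 2
      = frobNorm A ^ 2 + 2 * c * (w ⬝ᵥ (A *ᵥ y)) + c ^ 2 * (w ⬝ᵥ w) * (y ⬝ᵥ y) := by
  simp only [frobNorm_sq, Matrix.add_apply, Matrix.smul_apply, vecMulVec_apply, smul_eq_mul,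
    dotProduct, mulVec]
  have h2 : 2 * c * (∑ i, w i * ∑ j, A i j * y j) = ∑ i, ∑ j, 2 * c * (w i * (A i j * y j)) := by
    simp only [Finset.mul_sum]
  have h3 : c ^ 2 * (∑ i, w i * w i) * (∑ j, y j * y j)
      = ∑ i, ∑ j, c ^ 2 * ((w i * w i) * (y j * y j)) := by
    rw [mul_assoc, Finset.sum_mul_sum, Finset.mul_sum]
    exact Finset.sum_congr rfl fun i _ => by rw [Finset.mul_sum]
  rw [h2, h3]
  simp only [← Finset.sum_add_distrib]
  exact Finset.sum_congr rfl fun i _ => Finset.sum_congr rfl fun j _ => by ring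

lemma ftc {n : ℕ} (F : (Fin n → ℝ) → (Fin n → ℝ))
    (J : (Fin n → ℝ) → Matrix (Fin n) (Fin n) ℝ)
    (hF : ∀ z, HasFDerivAt F (LinearMap.toContinuousLinearMap ((J z).mulVecLin)) z)
    (hJc : Continuous J) (x u : Fin n → ℝ) :
    F (x + u) - F x = intJac J x u *ᵥ u := by
  have hline : ∀ t : ℝ, HasDerivAt (fun t : ℝ => x + t • u) u t := by
    intro t
    simpa using ((hasDerivAt_id t).smul_const u).const_add x
  have hcomp : ∀ t : ℝ, HasDerivAt (fun t : ℝ => F (x + t • u))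
      ((J (x + t • u)).mulVecLin u) t := by
    intro t
    exact (hF (x + t • u)).comp_hasDerivAt t (hline t)
  have hlc : Continuous fun t : ℝ => x + t • u := by continuity
  funext i
  have hi : ∀ t : ℝ, HasDerivAt (fun t : ℝ => F (x + t • u) i)
      ((J (x + t • u) *ᵥ u) i) t := by
    intro t
    exact hasDerivAt_pi.1 (hcomp t) i
  have hentry : ∀ j : Fin n, Continuous fun t : ℝ => J (x + t • u) i j := by
    intro j
    exact (continuous_apply j).comp ((continuous_apply i).comp (hJc.comp hlc))
  have hc : Continuous fun t : ℝ => (J (x + t • u) *ᵥ u) i := by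
    simp only [mulVec, dotProduct]
    exact continuous_finset_sum _ fun j _ => (hentry j).mul continuous_const
  have key := intervalIntegral.integral_eq_sub_of_hasDerivAt
    (f := fun t : ℝ => F (x + t • u) i) (f' := fun t : ℝ => (J (x + t • u) *ᵥ u) i)
    (a := (0:ℝ)) (b := 1) (fun t _ => hi t) (hc.intervalIntegrable 0 1)
  have swap : ∫ t in (0:ℝ)..1, (J (x + t • u) *ᵥ u) i
      = ∑ j, (∫ t in (0:ℝ)..1, J (x + t • u) i j) * u j := by
    simp only [mulVec, dotProduct]
    rw [intervalIntegral.integral_finset_sum (f := fun j t => J (x + t • u) i j * u j)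
      (fun j _ => ((hentry j).mul continuous_const : Continuous fun t : ℝ => J (x + t • u) i j * u j).intervalIntegrable 0 1)]
    exact Finset.sum_congr rfl fun j _ => intervalIntegral.integral_mul_const _ _
  have : F (x + u) i - F x i = ∑ j, (∫ t in (0:ℝ)..1, J (x + t • u) i j) * u j := by
    rw [← swap, key]
    simp
  simpa [intJac, mulVec, dotProduct] using this

/-- One-step Frobenius-measure inequality for Broyden's "bad" update:
`τ_{k+1}² ≤ τ_k² − ‖J*(J_k⁻¹ − H_k)y_k‖²/‖y_k‖² + 2(τ_k‖J̃_k‖ + ‖J̃_k‖²)` whenever the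
averaged Jacobian `J_k` is nonsingular. -/
theorem stmt10 {n : ℕ} (F : (Fin n → ℝ) → (Fin n → ℝ))
    (J : (Fin n → ℝ) → Matrix (Fin n) (Fin n) ℝ)
    (hF : ∀ z, HasFDerivAt F (LinearMap.toContinuousLinearMap ((J z).mulVecLin)) z)
    (hJc : Continuous J)
    (xs : Fin n → ℝ) (hxs : F xs = 0) (hJs : IsUnit (J xs).det)
    (x : ℕ → Fin n → ℝ) (H : ℕ → Matrix (Fin n) (Fin n) ℝ)
    (hHk : ∀ k, IsUnit (H k).det) (hFk : ∀ k, F (x k) ≠ 0)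
    (hyk : ∀ k, F (x (k + 1)) - F (x k) ≠ 0)
    (hx : ∀ k, x (k + 1) = x k - H k *ᵥ F (x k))
    (hH : ∀ k, H (k + 1) = H k +
        ((F (x (k + 1)) - F (x k)) ⬝ᵥ (F (x (k + 1)) - F (x k)))⁻¹ •
          vecMulVec (x (k + 1) - x k - H k *ᵥ (F (x (k + 1)) - F (x k)))
            (F (x (k + 1)) - F (x k))) :
    ∀ k : ℕ, IsUnit (intJac J (x k) (x (k + 1) - x k)).det →
      frobNorm (J xs * (H (k + 1) - (J xs)⁻¹)) ^ 2 ≤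
        frobNorm (J xs * (H k - (J xs)⁻¹)) ^ 2
          - vnorm (J xs *ᵥ (((intJac J (x k) (x (k + 1) - x k))⁻¹ - H k) *ᵥ
                (F (x (k + 1)) - F (x k)))) ^ 2
              / vnorm (F (x (k + 1)) - F (x k)) ^ 2
          + 2 * (frobNorm (J xs * (H k - (J xs)⁻¹)) *
                specNorm (J xs * ((intJac J (x k) (x (k + 1) - x k))⁻¹ - (J xs)⁻¹))
              + specNorm (J xs * ((intJac J (x k) (x (k + 1) - x k))⁻¹ - (J xs)⁻¹)) ^ 2) := by
  intro k hJk
  have hHe := hH k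
  have hy0 := hyk k
  set y : Fin n → ℝ := F (x (k + 1)) - F (x k) with hydef
  set u : Fin n → ℝ := x (k + 1) - x k with hudef
  set Js : Matrix (Fin n) (Fin n) ℝ := J xs with hJsdef
  set Jk : Matrix (Fin n) (Fin n) ℝ := intJac J (x k) u with hJkdef
  set A : Matrix (Fin n) (Fin n) ℝ := Js * (H k - Js⁻¹) with hAdef
  set Jt : Matrix (Fin n) (Fin n) ℝ := Js * (Jk⁻¹ - Js⁻¹) with hJtdef
  -- FTC: y = Jk *ᵥ u
  have hxu : x k + u = x (k + 1) := by rw [hudef]; abel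
  have hyJu : y = Jk *ᵥ u := by
    rw [hydef, hJkdef, ← hxu]
    exact ftc F J hF hJc (x k) u
  have hu_y : u = Jk⁻¹ *ᵥ y := by
    rw [hyJu, mulVec_mulVec, Matrix.nonsing_inv_mul _ hJk, one_mulVec]
  -- positivity of S
  have hSpos : 0 < vnorm y ^ 2 := by
    rw [vnorm_sq]
    rcases Function.ne_iff.mp hy0 with ⟨i, hi⟩
    have hi' : y i ≠ 0 := by simpa using hi
    exact Finset.sum_pos' (fun j _ => sq_nonneg _)
      ⟨i, Finset.mem_univ i, lt_of_le_of_ne (sq_nonneg _) (Ne.symm (pow_ne_zero 2 hi'))⟩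
  have hSdot : y ⬝ᵥ y = vnorm y ^ 2 := dot_self_eq y
  -- rewrite the update
  have hv : u - H k *ᵥ y = (Jk⁻¹ - H k) *ᵥ y := by
    rw [Matrix.sub_mulVec, ← hu_y]
  have hJtA : Js * (Jk⁻¹ - H k) = Jt - A := by
    rw [hJtdef, hAdef, ← Matrix.mul_sub, sub_sub_sub_cancel_right]
  set a : Fin n → ℝ := A *ᵥ y with hadef
  set b : Fin n → ℝ := Jt *ᵥ y with hbdef
  have hw : Js *ᵥ ((Jk⁻¹ - H k) *ᵥ y) = b - a := by
    rw [mulVec_mulVec, hJtA, Matrix.sub_mulVec]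
  have hA' : Js * (H (k + 1) - Js⁻¹)
      = A + (y ⬝ᵥ y)⁻¹ • vecMulVec (b - a) y := by
    rw [hHe, hv]
    rw [add_sub_right_comm, Matrix.mul_add, ← hAdef, Matrix.mul_smul, mul_vecMulVec, hw]
  rw [hA', hw, frob_expand]
  -- now pure arithmetic
  set τ : ℝ := frobNorm A with hτdef
  set σ : ℝ := specNorm Jt with hσdef
  have hτ0 : 0 ≤ τ := frobNorm_nonneg A
  have hσ0 : 0 ≤ σ := specNorm_nonneg Jt
  have ha2 : vnorm a ≤ τ * vnorm y := vnorm_mulVec_le_frob A y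
  have hb2 : vnorm b ≤ σ * vnorm y := vnorm_mulVec_le_spec Jt y
  have hq : b ⬝ᵥ b ≤ σ ^ 2 * vnorm y ^ 2 := by
    rw [dot_self_eq b]
    calc vnorm b ^ 2 ≤ (σ * vnorm y) ^ 2 :=
          pow_le_pow_left₀ (vnorm_nonneg b) hb2 2
      _ = σ ^ 2 * vnorm y ^ 2 := by ring
  have hr : -(a ⬝ᵥ b) ≤ τ * σ * vnorm y ^ 2 := by
    calc -(a ⬝ᵥ b) ≤ |a ⬝ᵥ b| := neg_le_abs _
      _ ≤ vnorm a * vnorm b := abs_dot_le a b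
      _ ≤ (τ * vnorm y) * (σ * vnorm y) :=
          mul_le_mul ha2 hb2 (vnorm_nonneg b) (mul_nonneg hτ0 (vnorm_nonneg y))
      _ = τ * σ * vnorm y ^ 2 := by ring
  -- expand dot products in terms of p q r
  have hbil1 : (b - a) ⬝ᵥ a = b ⬝ᵥ a - a ⬝ᵥ a := sub_dotProduct b a a
  have hbil2 : (b - a) ⬝ᵥ (b - a) = b ⬝ᵥ b - a ⬝ᵥ b - (b ⬝ᵥ a - a ⬝ᵥ a) := by
    rw [sub_dotProduct, dotProduct_sub, dotProduct_sub,
      dotProduct_comm b a]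
  have hcomm : b ⬝ᵥ a = a ⬝ᵥ b := dotProduct_comm b a
  have hwn : vnorm (b - a) ^ 2 = (b - a) ⬝ᵥ (b - a) := (dot_self_eq _).symm
  -- final inequality
  rw [hwn, hbil1, hbil2, hcomm, hSdot]
  set S : ℝ := vnorm y ^ 2 with hSdef
  have hS0 : S ≠ 0 := ne_of_gt hSpos
  have key : 2 * (b ⬝ᵥ b) - 2 * (a ⬝ᵥ b) ≤ (2 * (τ * σ + σ ^ 2)) * S := by
    nlinarith [hq, hr]
  have hX : 0 ≤ (2 * (τ * σ + σ ^ 2) * S - (2 * (b ⬝ᵥ b) - 2 * (a ⬝ᵥ b))) * S⁻¹ :=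
    mul_nonneg (by linarith [key]) (inv_nonneg.2 hSpos.le)
  have hG : (τ ^ 2 - (b ⬝ᵥ b - a ⬝ᵥ b - (a ⬝ᵥ b - a ⬝ᵥ a)) / S + 2 * (τ * σ + σ ^ 2))
      - (τ ^ 2 + 2 * S⁻¹ * (a ⬝ᵥ b - a ⬝ᵥ a)
          + S⁻¹ ^ 2 * (b ⬝ᵥ b - a ⬝ᵥ b - (a ⬝ᵥ b - a ⬝ᵥ a)) * S)
      = (2 * (τ * σ + σ ^ 2) * S - (2 * (b ⬝ᵥ b) - 2 * (a ⬝ᵥ b))) * S⁻¹ := by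
    field_simp
    ring
  linarith [hX, hG]
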